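/- Let c₀ ≥ 0, s > 0 with c₀·s² ≤ 1, and let t₀ ∈ ℝ. Let u : [t₀ − s, t₀ + s] → ℝ be a nonnegative twice continuously differentiable function with u''(t) ≥ −c₀·u(t) for all t in the interval. Then for every t ∈ [t₀ − s, t₀ + s] one has u(t) ≤ 2·(u(t₀ − s) + u(t₀ + s)). -/

import Mathlib

open Set

/-- Doubling estimate ((IV.2.14)–(IV.2.17)): if `u ≥ 0` is twice continuously differentiable
on `[t₀ − s, t₀ + s]` with `u'' ≥ −c₀ u` there and `c₀ s² ≤ 1`, then
`u(t) ≤ 2(u(t₀ − s) + u(t₀ + s))` on the interval. -/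
theorem doubling_estimate (c₀ s t₀ : ℝ) (hc₀ : 0 ≤ c₀) (hs : 0 < s)
    (hcs : c₀ * s ^ 2 ≤ 1) (u u' u'' : ℝ → ℝ)
    (hu0 : ∀ t ∈ Icc (t₀ - s) (t₀ + s), 0 ≤ u t)
    (hd1 : ∀ t ∈ Icc (t₀ - s) (t₀ + s), HasDerivAt u (u' t) t)
    (hd2 : ∀ t ∈ Icc (t₀ - s) (t₀ + s), HasDerivAt u' (u'' t) t)
    (hc : ContinuousOn u'' (Icc (t₀ - s) (t₀ + s)))
    (hineq : ∀ t ∈ Icc (t₀ - s) (t₀ + s), -c₀ * u t ≤ u'' t) :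
    ∀ t ∈ Icc (t₀ - s) (t₀ + s), u t ≤ 2 * (u (t₀ - s) + u (t₀ + s)) := by
  set a := t₀ - s with ha
  set b := t₀ + s with hb
  have hab : a ≤ b := by simp [ha, hb]; linarith
  have hIcc : IsCompact (Icc a b) := isCompact_Icc
  have hne : (Icc a b).Nonempty := nonempty_Icc.2 hab
  have hucont : ContinuousOn u (Icc a b) := fun t ht =>
    (hd1 t ht).continuousAt.continuousWithinAt
  obtain ⟨t₁, ht₁, hmax⟩ := hIcc.exists_isMaxOn hne hucont
  set M := u t₁ with hM
  have hM0 : 0 ≤ M := hu0 t₁ ht₁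
  have hle : ∀ t ∈ Icc a b, u t ≤ M := fun t ht => hmax ht
  -- auxiliary function
  set g : ℝ → ℝ := fun t => u t + c₀ * M / 2 * ((t - a) * (t - b)) with hg
  set g' : ℝ → ℝ := fun t => u' t + c₀ * M / 2 * (2 * t - (a + b)) with hg'
  have hgd1 : ∀ t ∈ Icc a b, HasDerivAt g (g' t) t := by
    intro t ht
    have h1 : HasDerivAt (fun t : ℝ => (t - a) * (t - b)) (2 * t - (a + b)) t := by
      have : HasDerivAt (fun x : ℝ => (x - a) * (x - b)) (1 * (t - b) + (t - a) * 1) t :=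
        ((hasDerivAt_id t).sub_const a).mul ((hasDerivAt_id t).sub_const b)
      convert this using 1
      ring
    exact (hd1 t ht).add ((h1.const_mul (c₀ * M / 2)).congr_deriv (by ring))
  have hgd2 : ∀ t ∈ Icc a b, HasDerivAt g' (u'' t + c₀ * M) t := by
    intro t ht
    have h1 : HasDerivAt (fun t : ℝ => 2 * t - (a + b)) 2 t := by
      simpa using ((hasDerivAt_id t).const_mul 2).sub_const (a + b)
    exact (hd2 t ht).add ((h1.const_mul (c₀ * M / 2)).congr_deriv (by ring))
  have hconv : ConvexOn ℝ (Icc a b) g := by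
    apply convexOn_of_hasDerivWithinAt2_nonneg (convex_Icc a b)
      (f' := g') (f'' := fun t => u'' t + c₀ * M)
    · exact fun t ht => (hgd1 t ht).continuousAt.continuousWithinAt
    · exact fun t ht => (hgd1 t (interior_subset ht)).hasDerivWithinAt
    · exact fun t ht => (hgd2 t (interior_subset ht)).hasDerivWithinAt
    · intro t ht
      have ht' := interior_subset ht
      have h1 := hineq t ht'
      have h2 := hle t ht'
      nlinarith
  -- endpoint bound via convexity
  have hend : ∀ t ∈ Icc a b, g t ≤ max (g a) (g b) := by
    intro t ht
    exact hconv.le_on_segment (left_mem_Icc.2 hab) (right_mem_Icc.2 hab)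
      (by rwa [← segment_eq_Icc hab] at ht)
  have hga : g a = u a := by simp [hg]
  have hgb : g b = u b := by simp [hg]
  have hmaxle : max (g a) (g b) ≤ u a + u b := by
    rw [hga, hgb]
    exact max_le (by linarith [hu0 b (right_mem_Icc.2 hab)])
      (by linarith [hu0 a (left_mem_Icc.2 hab)])
  -- bound M
  have hq : (t₁ - a) * (t₁ - b) ≥ -s ^ 2 := by
    obtain ⟨h1, h2⟩ := ht₁
    nlinarith [sq_nonneg (t₁ - t₀)]
  have hMbound : M ≤ u a + u b + M / 2 := by
    have := hend t₁ ht₁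
    have h2 : g t₁ = M + c₀ * M / 2 * ((t₁ - a) * (t₁ - b)) := by simp [hg, hM]
    have h3 : c₀ * M / 2 * ((t₁ - a) * (t₁ - b)) ≥ -(M / 2) := by
      nlinarith [mul_le_mul_of_nonneg_left hq
        (by positivity : (0:ℝ) ≤ c₀ * M / 2),
        mul_le_mul_of_nonneg_right hcs hM0]
    have h4 : g t₁ ≤ u a + u b := le_trans this hmaxle
    rw [h2] at h4
    linarith
  intro t ht
  have := hle t ht
  linarith [hu0 a (left_mem_Icc.2 hab), hu0 b (right_mem_Icc.2 hab)]
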